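/- The group Q₂₈ × C₁₃ is a Leinster group, where Q₂₈ is the dicyclic group of order 28. -/

import Mathlib

open scoped Classical

noncomputable def sigmaN (G : Type*) [Group G] [Fintype G] : ℕ :=
  ∑ H ∈ {H : Subgroup G | H.Normal}.toFinite.toFinset, Nat.card H

noncomputable def tauN (G : Type*) [Group G] [Fintype G] : ℕ :=
  {H : Subgroup G | H.Normal}.toFinite.toFinset.card

def IsLeinster (G : Type*) [Group G] [Fintype G] : Prop :=
  sigmaN G = 2 * Fintype.card G

section Coprime
variable {A B : Type*} [Group A] [Group B] [Fintype A] [Fintype B]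

lemma mem_of_fst (h : (Fintype.card A).Coprime (Fintype.card B))
    {H : Subgroup (A × B)} {x : A} {y : B} (hx : (x, y) ∈ H) : (x, (1 : B)) ∈ H := by
  have hp : ((x, y) : A × B) ^ Fintype.card B = (x ^ Fintype.card B, 1) := by
    simp [Prod.pow_def, pow_card_eq_one]
  have h1 : (x ^ Fintype.card B, (1:B)) ∈ H := hp ▸ H.pow_mem hx _
  -- Bezout
  have hc : IsCoprime (Fintype.card B : ℤ) (Fintype.card A : ℤ) :=
    Int.isCoprime_iff_gcd_eq_one.mpr (by exact_mod_cast h.symm)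
  obtain ⟨u, v, huv⟩ := hc
  have hxm : ((x, (1:B)) : A × B) ^ (Fintype.card B) = (x ^ Fintype.card B, 1) := by
    simp [Prod.pow_def]
  have hone : ((x, (1:B)) : A × B) ^ ((Fintype.card A : ℤ)) = 1 := by
    rw [zpow_natCast]; simp [Prod.pow_def, pow_card_eq_one]
  have key : ((x ^ Fintype.card B, (1:B)) : A × B) ^ u = (x, 1) := by
    calc ((x ^ Fintype.card B, (1:B)) : A × B) ^ u
        = (((x, (1:B)) : A × B) ^ ((Fintype.card B : ℤ))) ^ u := by rw [zpow_natCast, hxm]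
      _ = ((x, (1:B)) : A × B) ^ ((Fintype.card B : ℤ) * u) := (zpow_mul _ _ _).symm
      _ = ((x, (1:B)) : A × B) ^ (u * (Fintype.card B : ℤ) + v * (Fintype.card A : ℤ))
            * (((x, (1:B)) : A × B) ^ ((Fintype.card A : ℤ))) ^ (-v) := by
          rw [← zpow_mul, ← zpow_add]; congr 1; ring
      _ = (x, 1) := by rw [huv, hone, zpow_one, one_zpow, mul_one]
  exact key ▸ H.zpow_mem h1 u

lemma mem_of_snd (h : (Fintype.card A).Coprime (Fintype.card B))
    {H : Subgroup (A × B)} {x : A} {y : B} (hx : (x, y) ∈ H) : ((1 : A), y) ∈ H := by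
  have hp : ((x, y) : A × B) ^ Fintype.card A = (1, y ^ Fintype.card A) := by
    simp [Prod.pow_def, pow_card_eq_one]
  have h1 : ((1:A), y ^ Fintype.card A) ∈ H := hp ▸ H.pow_mem hx _
  have hc : IsCoprime (Fintype.card A : ℤ) (Fintype.card B : ℤ) :=
    Int.isCoprime_iff_gcd_eq_one.mpr (by exact_mod_cast h)
  obtain ⟨u, v, huv⟩ := hc
  have hxm : (((1:A), y) : A × B) ^ (Fintype.card A) = (1, y ^ Fintype.card A) := by
    simp [Prod.pow_def]
  have hone : (((1:A), y) : A × B) ^ ((Fintype.card B : ℤ)) = 1 := by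
    rw [zpow_natCast]; simp [Prod.pow_def, pow_card_eq_one]
  have key : (((1:A), y ^ Fintype.card A) : A × B) ^ u = (1, y) := by
    calc (((1:A), y ^ Fintype.card A) : A × B) ^ u
        = ((((1:A), y) : A × B) ^ ((Fintype.card A : ℤ))) ^ u := by rw [zpow_natCast, hxm]
      _ = (((1:A), y) : A × B) ^ ((Fintype.card A : ℤ) * u) := (zpow_mul _ _ _).symm
      _ = (((1:A), y) : A × B) ^ (u * (Fintype.card A : ℤ) + v * (Fintype.card B : ℤ))
            * ((((1:A), y) : A × B) ^ ((Fintype.card B : ℤ))) ^ (-v) := by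
          rw [← zpow_mul, ← zpow_add]; congr 1; ring
      _ = (1, y) := by rw [huv, hone, zpow_one, one_zpow, mul_one]
  exact key ▸ H.zpow_mem h1 u

lemma subgroup_eq_prod (h : (Fintype.card A).Coprime (Fintype.card B))
    (H : Subgroup (A × B)) :
    H = (H.map (MonoidHom.fst A B)).prod (H.map (MonoidHom.snd A B)) := by
  apply le_antisymm
  · rintro ⟨x, y⟩ hxy
    exact ⟨⟨(x,y), hxy, rfl⟩, ⟨(x,y), hxy, rfl⟩⟩
  · rintro ⟨x, y⟩ ⟨⟨⟨x1, y1⟩, h1, e1⟩, ⟨⟨x2, y2⟩, h2, e2⟩⟩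
    simp only [MonoidHom.coe_fst] at e1
    simp only [MonoidHom.coe_snd] at e2
    subst e1
    subst e2
    have := H.mul_mem (mem_of_fst h h1) (mem_of_snd h h2)
    simpa using this

lemma map_fst_prod (N₁ : Subgroup A) (N₂ : Subgroup B) :
    (N₁.prod N₂).map (MonoidHom.fst A B) = N₁ := by
  ext x
  constructor
  · rintro ⟨⟨x', y'⟩, ⟨hx', _⟩, rfl⟩; exact hx'
  · intro hx; exact ⟨(x, 1), ⟨hx, N₂.one_mem⟩, rfl⟩

lemma map_snd_prod (N₁ : Subgroup A) (N₂ : Subgroup B) :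
    (N₁.prod N₂).map (MonoidHom.snd A B) = N₂ := by
  ext y
  constructor
  · rintro ⟨⟨x', y'⟩, ⟨_, hy'⟩, rfl⟩; exact hy'
  · intro hy; exact ⟨(1, y), ⟨N₁.one_mem, hy⟩, rfl⟩

lemma sigmaN_prod (h : (Fintype.card A).Coprime (Fintype.card B)) :
    sigmaN (A × B) = sigmaN A * sigmaN B := by
  unfold sigmaN
  rw [Finset.sum_mul_sum, ← Finset.sum_product']
  refine Finset.sum_nbij'
    (i := fun H => (H.map (MonoidHom.fst A B), H.map (MonoidHom.snd A B)))
    (j := fun p => p.1.prod p.2) ?_ ?_ ?_ ?_ ?_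
  · intro H hH
    simp only [Set.Finite.mem_toFinset, Set.mem_setOf_eq] at hH
    simp only [Finset.mem_product, Set.Finite.mem_toFinset, Set.mem_setOf_eq]
    constructor
    · exact Subgroup.Normal.map hH _ (fun a => ⟨(a, 1), rfl⟩)
    · exact Subgroup.Normal.map hH _ (fun b => ⟨(1, b), rfl⟩)
  · intro p hp
    simp only [Finset.mem_product, Set.Finite.mem_toFinset, Set.mem_setOf_eq] at hp
    simp only [Set.Finite.mem_toFinset, Set.mem_setOf_eq]
    haveI := hp.1; haveI := hp.2
    exact Subgroup.prod_normal p.1 p.2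
  · intro H hH
    exact (subgroup_eq_prod h H).symm
  · intro p hp
    simp [map_fst_prod, map_snd_prod]
  · intro H hH
    have e := subgroup_eq_prod h H
    conv_lhs => rw [e]
    rw [Nat.card_congr (Subgroup.prodEquiv _ _).toEquiv, Nat.card_prod]

end Coprime

lemma c13_subgroups (H : Subgroup (Multiplicative (ZMod 13))) : H = ⊥ ∨ H = ⊤ := by
  have hd : Nat.card H ∣ 13 := by
    have := Subgroup.card_subgroup_dvd_card H
    simpa using this
  have hp : Nat.Prime 13 := by norm_num
  rcases (Nat.Prime.eq_one_or_self_of_dvd hp _ hd) with h1 | h13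
  · left; exact Subgroup.eq_bot_of_card_eq H h1
  · right
    apply Subgroup.eq_top_of_card_eq
    rw [h13]; simp

lemma sigmaN_c13 : sigmaN (Multiplicative (ZMod 13)) = 14 := by
  unfold sigmaN
  have hset : {H : Subgroup (Multiplicative (ZMod 13)) | H.Normal} = {⊥, ⊤} := by
    ext H
    simp only [Set.mem_setOf_eq, Set.mem_insert_iff, Set.mem_singleton_iff]
    constructor
    · intro _; exact c13_subgroups H
    · rintro (rfl | rfl) <;> infer_instance
  have : {H : Subgroup (Multiplicative (ZMod 13)) | H.Normal}.toFinite.toFinset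
      = ({⊥, ⊤} : Finset (Subgroup (Multiplicative (ZMod 13)))) := by
    ext H
    rw [Set.Finite.mem_toFinset, hset]
    simp
  rw [this]
  have hbt : (⊥ : Subgroup (Multiplicative (ZMod 13))) ≠ ⊤ := by
    intro h
    have h2 : (Nat.card (⊥ : Subgroup (Multiplicative (ZMod 13)))) = Nat.card (⊤ : Subgroup (Multiplicative (ZMod 13))) := by rw [h]
    rw [Subgroup.card_bot, Subgroup.card_top, Nat.card_eq_fintype_card] at h2
    simp at h2
  rw [Finset.sum_insert (by simpa using hbt), Finset.sum_singleton]
  rw [Subgroup.card_bot, Subgroup.card_top, Nat.card_eq_fintype_card]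
  simp

open QuaternionGroup

abbrev Q : Type := QuaternionGroup 7

lemma a_inv (i : ZMod (2*7)) : (a i : Q)⁻¹ = a (-i) := rfl
lemma xa_inv (i : ZMod (2*7)) : (xa i : Q)⁻¹ = xa ((7 : ZMod (2*7)) + i) := rfl

lemma a_pow (i : ZMod (2*7)) (k : ℕ) : (a i : Q) ^ k = a ((k : ZMod (2*7)) * i) := by
  induction k with
  | zero => simp
  | succ k ih => rw [pow_succ, ih, a_mul_a]; congr 1; push_cast; ring

lemma zmod_val_cast (j : ZMod (2*7)) : ((j.val : ZMod (2*7))) = j := by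
  simp [ZMod.natCast_val, ZMod.cast_id]

lemma a_mem_pow {H : Subgroup Q} {i : ZMod (2*7)} (h : (a i : Q) ∈ H) (j : ZMod (2*7)) :
    (a (j * i) : Q) ∈ H := by
  have := H.pow_mem h j.val
  rwa [a_pow, zmod_val_cast] at this

def K2 : Subgroup Q where
  carrier := {x | x = a 0 ∨ x = a 7}
  one_mem' := by left; exact one_def
  mul_mem' := by rintro x y (rfl | rfl) (rfl | rfl) <;> decide
  inv_mem' := by rintro x (rfl | rfl) <;> decide

def K7 : Subgroup Q where
  carrier := {x | ∃ j : ZMod (2*7), x = a (2 * j)}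
  one_mem' := ⟨0, by decide⟩
  mul_mem' := by
    rintro x y ⟨j, rfl⟩ ⟨k, rfl⟩
    exact ⟨j + k, by rw [a_mul_a]; congr 1; ring⟩
  inv_mem' := by
    rintro x ⟨j, rfl⟩
    exact ⟨-j, by rw [a_inv]; congr 1; ring⟩

def K14 : Subgroup Q where
  carrier := Set.range a
  one_mem' := ⟨0, one_def.symm⟩
  mul_mem' := by rintro x y ⟨i, rfl⟩ ⟨j, rfl⟩; exact ⟨i + j, (a_mul_a i j).symm⟩
  inv_mem' := by rintro x ⟨i, rfl⟩; exact ⟨-i, (a_inv i).symm⟩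

instance K2_normal : K2.Normal := by
  constructor
  rintro x hx g
  rcases hx with rfl | rfl <;> rcases g with k | k
  · left; simp only [a_mul_a, a_mul_xa, xa_mul_a, xa_mul_xa, a_inv, xa_inv]; congr 1; push_cast; ring
  · left; simp only [a_mul_a, a_mul_xa, xa_mul_a, xa_mul_xa, a_inv, xa_inv]; congr 1; push_cast
    ring_nf
    decide
  · right; simp only [a_mul_a, a_mul_xa, xa_mul_a, xa_mul_xa, a_inv, xa_inv]; congr 1; push_cast; ring
  · right; simp only [a_mul_a, a_mul_xa, xa_mul_a, xa_mul_xa, a_inv, xa_inv]; congr 1; push_cast; ring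
instance K7_normal : K7.Normal := by
  constructor
  rintro x hx g
  obtain ⟨j, rfl⟩ := hx
  rcases g with k | k
  · exact ⟨j, by simp only [a_mul_a, a_mul_xa, xa_mul_a, xa_mul_xa, a_inv, xa_inv]; congr 1; push_cast; ring⟩
  · exact ⟨-j, by
      simp only [a_mul_a, a_mul_xa, xa_mul_a, xa_mul_xa, a_inv, xa_inv]; congr 1; push_cast
      have h14 : (14:ZMod (2*7)) = 0 := by decide
      linear_combination h14⟩

instance K14_normal : K14.Normal := by
  constructor
  rintro x hx g
  obtain ⟨j, rfl⟩ := hx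
  rcases g with k | k
  · exact ⟨k + j + -k, by simp only [a_inv, a_mul_a]⟩
  · exact ⟨(7:ZMod (2*7)) + ((7:ZMod (2*7)) + k) - (k + j),
      by rw [xa_mul_a, xa_inv, xa_mul_xa]; norm_num⟩

lemma q28_classify (H : Subgroup Q) (hH : H.Normal) :
    H = ⊥ ∨ H = K2 ∨ H = K7 ∨ H = K14 ∨ H = ⊤ := by
  by_cases hxa : ∃ i, (xa i : Q) ∈ H
  · -- H = ⊤
    obtain ⟨i, hi⟩ := hxa
    have hconj : (xa (i - 2) : Q) ∈ H := by
      have := hH.conj_mem _ hi (a 1)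
      rw [a_mul_xa, a_inv, xa_mul_a] at this
      convert this using 2; ring
    have hinv : (xa ((7:ZMod (2*7)) + i) : Q) ∈ H := by
      have := H.inv_mem hi; rwa [xa_inv] at this
    have ha2 : (a (-2) : Q) ∈ H := by
      have := H.mul_mem hinv hconj
      rw [xa_mul_xa] at this
      convert this using 2; push_cast; ring
    have ha7 : (a 7 : Q) ∈ H := by
      have := H.mul_mem hi hi
      rw [xa_mul_xa] at this
      convert this using 2; push_cast; ring
    have ha1 : (a 1 : Q) ∈ H := by
      have := H.mul_mem ha7 (a_mem_pow ha2 3)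
      rw [a_mul_a] at this
      convert this using 2; decide
    have haj : ∀ j : ZMod (2*7), (a j : Q) ∈ H := by
      intro j
      have := a_mem_pow ha1 j
      rwa [mul_one] at this
    right; right; right; right
    rw [Subgroup.eq_top_iff']
    rintro (j | j)
    · exact haj j
    · have := H.mul_mem hi (haj (j - i))
      rw [xa_mul_a] at this
      convert this using 2; ring
  · push_neg at hxa
    have hsub : ∀ x ∈ H, ∃ i, x = (a i : Q) := by
      rintro (i | i) hx
      · exact ⟨i, rfl⟩
      · exact absurd hx (hxa i)
    by_cases h2 : (a 2 : Q) ∈ H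
    · have hall2 : ∀ j : ZMod (2*7), (a (2 * j) : Q) ∈ H := by
        intro j
        have := a_mem_pow h2 j
        convert this using 2; ring
      by_cases h7 : (a 7 : Q) ∈ H
      · -- H = K14
        right; right; right; left
        have ha1 : (a 1 : Q) ∈ H := by
          have := H.mul_mem h7 (H.inv_mem (hall2 3))
          rw [a_inv, a_mul_a] at this
          convert this using 2; decide
        ext x
        constructor
        · intro hx
          obtain ⟨i, rfl⟩ := hsub x hx
          exact ⟨i, rfl⟩
        · rintro ⟨i, rfl⟩
          have := a_mem_pow ha1 i
          rwa [mul_one] at this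
      · -- H = K7
        right; right; left
        ext x
        constructor
        · intro hx
          obtain ⟨i, rfl⟩ := hsub x hx
          rcases (by decide : ∀ i : ZMod (2*7), (∃ j, i = 2*j) ∨ (∃ j, i = 2*j + 7)) i with ⟨j, rfl⟩ | ⟨j, rfl⟩
          · exact ⟨j, rfl⟩
          · exfalso
            apply h7
            have := H.mul_mem hx (H.inv_mem (hall2 j))
            rw [a_inv, a_mul_a] at this
            convert this using 2; ring
        · rintro ⟨j, rfl⟩
          exact hall2 j
    · have hsmall : ∀ i : ZMod (2*7), (a i : Q) ∈ H → i = 0 ∨ i = 7 := by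
        intro i hi
        by_contra hcon
        push_neg at hcon
        obtain ⟨k, hk⟩ := (by decide : ∀ i : ZMod (2*7), i ≠ 0 → i ≠ 7 → ∃ k : ZMod (2*7), k * i = 2) i hcon.1 hcon.2
        exact h2 (hk ▸ a_mem_pow hi k)
      by_cases h7 : (a 7 : Q) ∈ H
      · -- H = K2
        right; left
        ext x
        constructor
        · intro hx
          obtain ⟨i, rfl⟩ := hsub x hx
          rcases hsmall i hx with rfl | rfl
          · left; rfl
          · right; rfl
        · rintro (rfl | rfl)
          · exact one_def ▸ H.one_mem
          · exact h7
      · -- H = ⊥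
        left
        rw [Subgroup.eq_bot_iff_forall]
        intro x hx
        obtain ⟨i, rfl⟩ := hsub x hx
        rcases hsmall i hx with rfl | rfl
        · exact one_def.symm
        · exact absurd hx h7

lemma card_K2 : Nat.card K2 = 2 := by
  have h : (K2 : Set Q) = ↑({a 0, a 7} : Finset Q) := by
    ext x
    show x = a 0 ∨ x = a 7 ↔ _
    simp
  rw [← SetLike.coe_sort_coe, Nat.card_coe_set_eq, h, Set.ncard_coe_finset]
  decide

lemma card_K7 : Nat.card K7 = 7 := by
  have h : (K7 : Set Q) = ↑({a 0, a 2, a 4, a 6, a 8, a 10, a 12} : Finset Q) := by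
    ext x
    show (∃ j : ZMod (2*7), x = a (2 * j)) ↔ _
    constructor
    · rintro ⟨j, rfl⟩
      revert j; decide
    · intro hx
      simp only [Finset.coe_insert, Set.mem_insert_iff, Finset.coe_singleton,
        Set.mem_singleton_iff] at hx
      rcases hx with rfl|rfl|rfl|rfl|rfl|rfl|rfl <;> decide
  rw [← SetLike.coe_sort_coe, Nat.card_coe_set_eq, h, Set.ncard_coe_finset]
  decide

lemma card_K14 : Nat.card K14 = 14 := by
  have h : Function.Injective (a : ZMod (2*7) → Q) := fun i j hij => by
    simpa using hij
  rw [← SetLike.coe_sort_coe]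
  show Nat.card (Set.range a) = 14
  rw [Nat.card_range_of_injective h, Nat.card_eq_fintype_card, ZMod.card]

lemma card_botQ : Nat.card (⊥ : Subgroup Q) = 1 := Subgroup.card_bot

lemma card_topQ : Nat.card (⊤ : Subgroup Q) = 28 := by
  rw [Subgroup.card_top, Nat.card_eq_fintype_card, QuaternionGroup.card]

lemma sigmaN_q28 : sigmaN (QuaternionGroup 7) = 52 := by
  have hne : ∀ (H K : Subgroup Q), Nat.card H ≠ Nat.card K → H ≠ K := by
    intro H K h e; exact h (by rw [e])
  have hset : {H : Subgroup Q | H.Normal} = {⊥, K2, K7, K14, ⊤} := by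
    ext H
    simp only [Set.mem_setOf_eq, Set.mem_insert_iff, Set.mem_singleton_iff]
    constructor
    · exact q28_classify H
    · rintro (rfl | rfl | rfl | rfl | rfl) <;> infer_instance
  have hfs : {H : Subgroup Q | H.Normal}.toFinite.toFinset
      = ({⊥, K2, K7, K14, ⊤} : Finset (Subgroup Q)) := by
    ext H
    rw [Set.Finite.mem_toFinset, hset]
    simp
  unfold sigmaN
  rw [hfs]
  have n1 : (⊥ : Subgroup Q) ≠ K2 := hne _ _ (by rw [card_botQ, card_K2]; omega)
  have n2 : (⊥ : Subgroup Q) ≠ K7 := hne _ _ (by rw [card_botQ, card_K7]; omega)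
  have n3 : (⊥ : Subgroup Q) ≠ K14 := hne _ _ (by rw [card_botQ, card_K14]; omega)
  have n4 : (⊥ : Subgroup Q) ≠ ⊤ := hne _ _ (by rw [card_botQ, card_topQ]; omega)
  have n5 : K2 ≠ K7 := hne _ _ (by rw [card_K2, card_K7]; omega)
  have n6 : K2 ≠ K14 := hne _ _ (by rw [card_K2, card_K14]; omega)
  have n7 : K2 ≠ ⊤ := hne _ _ (by rw [card_K2, card_topQ]; omega)
  have n8 : K7 ≠ K14 := hne _ _ (by rw [card_K7, card_K14]; omega)
  have n9 : K7 ≠ ⊤ := hne _ _ (by rw [card_K7, card_topQ]; omega)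
  have n10 : K14 ≠ ⊤ := hne _ _ (by rw [card_K14, card_topQ]; omega)
  rw [Finset.sum_insert (by simp [n1, n2, n3, n4]),
    Finset.sum_insert (by simp [n5, n6, n7]),
    Finset.sum_insert (by simp [n8, n9]),
    Finset.sum_insert (by simp [n10]),
    Finset.sum_singleton]
  rw [card_botQ, card_K2, card_K7, card_K14, card_topQ]
  omega

theorem stmt4 : IsLeinster (QuaternionGroup 7 × Multiplicative (ZMod 13)) := by
  unfold IsLeinster
  have hcop : (Fintype.card (QuaternionGroup 7)).Coprime
      (Fintype.card (Multiplicative (ZMod 13))) := by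
    rw [QuaternionGroup.card]
    have : Fintype.card (Multiplicative (ZMod 13)) = 13 := by
      rw [show Fintype.card (Multiplicative (ZMod 13)) = Fintype.card (ZMod 13) from rfl,
        ZMod.card]
    rw [this]
    decide
  rw [sigmaN_prod hcop, sigmaN_q28, sigmaN_c13, Fintype.card_prod, QuaternionGroup.card]
  rw [show Fintype.card (Multiplicative (ZMod 13)) = Fintype.card (ZMod 13) from rfl, ZMod.card]
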